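/- Let k and τ be natural numbers and p, q real numbers with 0 < p < q < 1, and suppose τ ≤ k·q. Then Σ_{v : ℕ, k·q ≤ v ≤ k} C(k, v)·p^{v}·(1 - p)^{k - v} ≤ exp(-(τ/q)·D(q‖p)), where D(q‖p) = q·log(q/p) + (1 - q)·log((1 - q)/(1 - p)). -/

import Mathlib

open Finset Real

/-- If `τ ≤ k·q` and `0 < p < q < 1`, then the binomial upper tail satisfies
`Σ_{v : k·q ≤ v ≤ k} C(k,v)·p^v·(1-p)^{k-v} ≤ exp(-(τ/q)·D(q‖p))`. -/
theorem binomial_tail_threshold_bound (k τ : ℕ) (p q : ℝ)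
    (hp : 0 < p) (hpq : p < q) (hq : q < 1) (hτ : (τ : ℝ) ≤ (k : ℝ) * q) :
    ∑ v ∈ (Finset.range (k + 1)).filter
        (fun v : ℕ => (k : ℝ) * q ≤ (v : ℝ)),
        (k.choose v : ℝ) * p ^ v * (1 - p) ^ (k - v)
      ≤ Real.exp (-((τ : ℝ) / q) *
          (q * Real.log (q / p) + (1 - q) * Real.log ((1 - q) / (1 - p)))) := by
  have hq0 : 0 < q := hp.trans hpq
  have h1q : 0 < 1 - q := by linarith
  have h1p : 0 < 1 - p := by linarith
  set D : ℝ := q * Real.log (q / p) + (1 - q) * Real.log ((1 - q) / (1 - p)) with hDdef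
  set a : ℝ := q * (1 - p) / (p * (1 - q)) with ha
  have ha0 : 0 < a := by positivity
  have ha1 : 1 < a := by
    rw [ha, lt_div_iff₀ (by positivity)]
    nlinarith
  have hloga : Real.log a = Real.log (q / p) + Real.log ((1 - p) / (1 - q)) := by
    rw [ha, show q * (1 - p) / (p * (1 - q)) = (q / p) * ((1 - p) / (1 - q)) by
      field_simp]
    exact Real.log_mul (by positivity) (by positivity)
  have hflip1 : Real.log (p / q) = -Real.log (q / p) := by
    rw [← Real.log_inv, inv_div]
  have hflip2 : Real.log ((1 - q) / (1 - p)) = -Real.log ((1 - p) / (1 - q)) := by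
    rw [← Real.log_inv, inv_div]
  -- KL divergence is nonnegative
  have hDnn : 0 ≤ D := by
    have hA : Real.log (p / q) ≤ p / q - 1 :=
      Real.log_le_sub_one_of_pos (by positivity)
    have hB : Real.log ((1 - p) / (1 - q)) ≤ (1 - p) / (1 - q) - 1 :=
      Real.log_le_sub_one_of_pos (by positivity)
    have e1 : q * Real.log (p / q) ≤ q * (p / q - 1) :=
      mul_le_mul_of_nonneg_left hA hq0.le
    have e2 : (1 - q) * Real.log ((1 - p) / (1 - q))
        ≤ (1 - q) * ((1 - p) / (1 - q) - 1) :=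
      mul_le_mul_of_nonneg_left hB h1q.le
    have c1 : q * (p / q - 1) = p - q := by field_simp
    have c2 : (1 - q) * ((1 - p) / (1 - q) - 1) = q - p := by field_simp; ring
    rw [hDdef]
    nlinarith [e1, e2]
  set R : ℝ := a ^ (-((k : ℝ) * q)) with hR
  -- termwise Chernoff bound
  have hterm : ∀ v ∈ (Finset.range (k + 1)).filter
      (fun v : ℕ => (k : ℝ) * q ≤ (v : ℝ)),
      (k.choose v : ℝ) * p ^ v * (1 - p) ^ (k - v)
        ≤ R * ((p * a) ^ v * (1 - p) ^ (k - v) * (k.choose v : ℝ)) := by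
    intro v hv
    simp only [mem_filter, mem_range] at hv
    have h1 : (1 : ℝ) ≤ R * a ^ v := by
      have heq : R * a ^ v = a ^ ((v : ℝ) - (k : ℝ) * q) := by
        rw [hR, ← Real.rpow_natCast a v, ← Real.rpow_add ha0]
        ring_nf
      rw [heq]
      calc (1 : ℝ) = a ^ (0 : ℝ) := (Real.rpow_zero a).symm
      _ ≤ _ := Real.rpow_le_rpow_of_exponent_le ha1.le (by linarith [hv.2])
    calc (k.choose v : ℝ) * p ^ v * (1 - p) ^ (k - v)
        = 1 * ((k.choose v : ℝ) * p ^ v * (1 - p) ^ (k - v)) := by ring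
      _ ≤ (R * a ^ v) * ((k.choose v : ℝ) * p ^ v * (1 - p) ^ (k - v)) := by
          apply mul_le_mul_of_nonneg_right h1
          positivity
      _ = R * ((p * a) ^ v * (1 - p) ^ (k - v) * (k.choose v : ℝ)) := by
          rw [mul_pow]; ring
  have hRnn : 0 ≤ R := by positivity
  have s1 : ∑ v ∈ (Finset.range (k + 1)).filter
        (fun v : ℕ => (k : ℝ) * q ≤ (v : ℝ)),
        (k.choose v : ℝ) * p ^ v * (1 - p) ^ (k - v)
      ≤ ∑ v ∈ (Finset.range (k + 1)).filter
        (fun v : ℕ => (k : ℝ) * q ≤ (v : ℝ)),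
        R * ((p * a) ^ v * (1 - p) ^ (k - v) * (k.choose v : ℝ)) :=
    Finset.sum_le_sum hterm
  have s2 : ∑ v ∈ (Finset.range (k + 1)).filter
        (fun v : ℕ => (k : ℝ) * q ≤ (v : ℝ)),
        R * ((p * a) ^ v * (1 - p) ^ (k - v) * (k.choose v : ℝ))
      ≤ ∑ v ∈ Finset.range (k + 1),
        R * ((p * a) ^ v * (1 - p) ^ (k - v) * (k.choose v : ℝ)) := by
    apply Finset.sum_le_sum_of_subset_of_nonneg (Finset.filter_subset _ _)
    intro i _ _
    positivity
  have s3 : ∑ v ∈ Finset.range (k + 1),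
        R * ((p * a) ^ v * (1 - p) ^ (k - v) * (k.choose v : ℝ))
      = R * ((p * a) + (1 - p)) ^ k := by
    rw [← Finset.mul_sum, ← add_pow]
  have step1 : ∑ v ∈ (Finset.range (k + 1)).filter
        (fun v : ℕ => (k : ℝ) * q ≤ (v : ℝ)),
        (k.choose v : ℝ) * p ^ v * (1 - p) ^ (k - v)
      ≤ R * ((p * a) + (1 - p)) ^ k := by
    rw [← s3]; exact s1.trans s2
  have hpa : p * a + (1 - p) = (1 - p) / (1 - q) := by
    rw [ha]; field_simp; ring
  rw [hpa] at step1
  refine step1.trans ?_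
  -- rewrite LHS as an exponential and compare exponents
  have hRexp : R = Real.exp (-((k : ℝ) * q) * Real.log a) := by
    rw [hR, Real.rpow_def_of_pos ha0]
    ring_nf
  have hpow : ((1 - p) / (1 - q)) ^ k
      = Real.exp ((k : ℝ) * Real.log ((1 - p) / (1 - q))) := by
    rw [Real.exp_nat_mul, Real.exp_log (by positivity)]
  rw [hRexp, hpow, ← Real.exp_add, Real.exp_le_exp]
  have hτq : (τ : ℝ) / q ≤ (k : ℝ) := (div_le_iff₀ hq0).mpr hτ
  have hmul : ((τ : ℝ) / q) * D ≤ (k : ℝ) * D :=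
    mul_le_mul_of_nonneg_right hτq hDnn
  have hDeq : -((k : ℝ) * q) * Real.log a + (k : ℝ) * Real.log ((1 - p) / (1 - q))
      = -((k : ℝ)) * D := by
    rw [hDdef, hloga, hflip2]
    ring
  rw [hDeq]
  linarith
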